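/- For every game G the following hold. (JEP) For all finite games G₁, G₂ and all game embeddings f : G₁ → G and g : G₂ → G, there exist a finite game G' and game embeddings f' : G₁ → G', g' : G₂ → G', and i : G' → G such that i ∘ f' = f and i ∘ g' = g. (AP) Moreover, if additionally H is a finite game and c₁ : H → G₁, c₂ : H → G₂ are game embeddings with f ∘ c₁ = g ∘ c₂, then G', f', g', i as above can be chosen so that also f' ∘ c₁ = g' ∘ c₂. -/

import Mathlib

universe u v w x y

namespace FraisseGames

/-- The initial segment (of length `n`) of an infinite sequence `R`. -/
def runPrefix {M : Type u} (R : ℕ → M) (n : ℕ) : List M :=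
  (List.range n).map R

/-- `T` is a game tree over `M`: it is closed under initial segments, and every
moment of `T` has a one-step extension in `T`. -/
def IsGameTree {M : Type u} (T : Set (List M)) : Prop :=
  (∀ t ∈ T, ∀ k : ℕ, t.take k ∈ T) ∧ ∀ t ∈ T, ∃ x : M, t ++ [x] ∈ T

/-- The set of runs of the tree `T`. -/
def Runs {M : Type u} (T : Set (List M)) : Set (ℕ → M) :=
  {R | ∀ n : ℕ, runPrefix R n ∈ T}

/-- A game over `M`: a game tree together with a payoff set of runs. -/
structure Game (M : Type u) : Type u where
  tree : Set (List M)
  isGameTree : IsGameTree tree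
  payoff : Set (ℕ → M)
  payoff_subset : payoff ⊆ Runs tree

/-- A game is finite if its set of runs is finite. -/
def Game.IsFin {M : Type u} (G : Game M) : Prop := (Runs G.tree).Finite

/-- The subgame relation `G ≤ G'`. -/
def Game.Sub {M : Type u} (G G' : Game M) : Prop :=
  G.tree ⊆ G'.tree ∧ G.payoff = G'.payoff ∩ Runs G.tree

/-- `f` is a chronological map from `T₁` to `T₂`: it maps `T₁` into `T₂` and it
preserves lengths and truncations of moments. -/
def Chronological {M₁ : Type u} {M₂ : Type v} (T₁ : Set (List M₁)) (T₂ : Set (List M₂))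
    (f : List M₁ → List M₂) : Prop :=
  (∀ t ∈ T₁, f t ∈ T₂) ∧ (∀ t ∈ T₁, (f t).length = t.length) ∧
    ∀ t ∈ T₁, ∀ k : ℕ, f (t.take k) = (f t).take k

/-- `BarMapsTo f R S` says that the map `f̄` on runs induced by the chronological
map `f` sends the run `R` to the run `S`, i.e. `S↾n = f (R↾n)` for all `n`. -/
def BarMapsTo {M₁ : Type u} {M₂ : Type v} (f : List M₁ → List M₂)
    (R : ℕ → M₁) (S : ℕ → M₂) : Prop :=
  ∀ n : ℕ, runPrefix S n = f (runPrefix R n)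

/-- `f` is an A-morphism from `G₁` to `G₂`: a chronological map whose induced map on
runs sends runs won by Ali to runs won by Ali. -/
def IsAMorphism {M₁ : Type u} {M₂ : Type v} (G₁ : Game M₁) (G₂ : Game M₂)
    (f : List M₁ → List M₂) : Prop :=
  Chronological G₁.tree G₂.tree f ∧
    ∀ R ∈ G₁.payoff, ∀ S : ℕ → M₂, BarMapsTo f R S → S ∈ G₂.payoff

/-- `f` is a game embedding from `G₁` to `G₂`: a chronological map, injective on the
tree, such that for every run `R` of `G₁`, `R ∈ A₁ ↔ f̄ R ∈ A₂`. -/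
def IsGameEmbedding {M₁ : Type u} {M₂ : Type v} (G₁ : Game M₁) (G₂ : Game M₂)
    (f : List M₁ → List M₂) : Prop :=
  Chronological G₁.tree G₂.tree f ∧
    (∀ t ∈ G₁.tree, ∀ s ∈ G₁.tree, f t = f s → t = s) ∧
    ∀ R ∈ Runs G₁.tree, ∀ S : ℕ → M₂, BarMapsTo f R S → (R ∈ G₁.payoff ↔ S ∈ G₂.payoff)

/-- `f` is an isomorphism of games from `G₁` onto `G₂`: a game embedding that is
surjective onto the tree of `G₂`. -/
def IsGameIso {M₁ : Type u} {M₂ : Type v} (G₁ : Game M₁) (G₂ : Game M₂)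
    (f : List M₁ → List M₂) : Prop :=
  IsGameEmbedding G₁ G₂ f ∧ ∀ s ∈ G₂.tree, ∃ t ∈ G₁.tree, f t = s

/-- The set of eventually-zero infinite sequences of natural numbers. -/
def c00 : Set (ℕ → ℕ) := {R | ∃ N : ℕ, ∀ n ≥ N, R n = 0}

/-- The game `G_FL = (ω^{<ω}, c₀₀)`. -/
def GFL : Game ℕ where
  tree := Set.univ
  isGameTree := ⟨fun _ _ _ => trivial, fun _ _ => ⟨0, trivial⟩⟩
  payoff := c00
  payoff_subset := fun _ _ _ => trivial


section Aux

variable {M : Type u} {M₁ : Type v} {M₂ : Type w}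

lemma runPrefix_length (R : ℕ → M) (n : ℕ) : (runPrefix R n).length = n := by
  simp [runPrefix]

lemma runPrefix_take (R : ℕ → M) {n m : ℕ} (h : n ≤ m) :
    (runPrefix R m).take n = runPrefix R n := by
  simp [runPrefix, ← List.map_take, List.take_range, Nat.min_eq_left h]

lemma runPrefix_getElem (R : ℕ → M) {n k : ℕ} (h : k < n) :
    (runPrefix R n)[k]'(by simpa [runPrefix_length] using h) = R k := by
  simp [runPrefix]

lemma runPrefix_getD (R : ℕ → M) (n : ℕ) (d : M) :
    (runPrefix R (n+1)).getD n d = R n := by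
  rw [List.getD_eq_getElem _ d (by simp [runPrefix_length])]
  exact runPrefix_getElem R (Nat.lt_succ_self n)

lemma eq_of_runPrefix_eq {R S : ℕ → M} (h : ∀ n, runPrefix R n = runPrefix S n) :
    R = S := by
  funext n
  have := congrArg (fun l => l.getD n (R n)) (h (n+1))
  rwa [runPrefix_getD, runPrefix_getD] at this

variable {T₁ : Set (List M₁)} {T : Set (List M)} {f : List M₁ → List M}

lemma image_take_closed (hc : Chronological T₁ T f)
    (hT₁ : ∀ t ∈ T₁, ∀ k : ℕ, t.take k ∈ T₁) :
    ∀ s ∈ f '' T₁, ∀ k : ℕ, s.take k ∈ f '' T₁ := by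
  rintro _ ⟨t, ht, rfl⟩ k
  exact ⟨t.take k, hT₁ t ht k, hc.2.2 t ht k⟩

lemma image_ext (hc : Chronological T₁ T f)
    (hext : ∀ t ∈ T₁, ∃ x, t ++ [x] ∈ T₁) :
    ∀ s ∈ f '' T₁, ∃ y, s ++ [y] ∈ f '' T₁ := by
  rintro _ ⟨t, ht, rfl⟩
  obtain ⟨x, hx⟩ := hext t ht
  have hlen : (f (t ++ [x])).length = t.length + 1 := by
    rw [hc.2.1 _ hx]; simp
  have htake : (f (t ++ [x])).take t.length = f t := by
    rw [← hc.2.2 _ hx t.length, List.take_left]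
  have hdroplen : ((f (t ++ [x])).drop t.length).length = 1 := by
    simp [hlen]
  obtain ⟨y, hy⟩ := List.length_eq_one_iff.mp hdroplen
  refine ⟨y, ?_⟩
  have : f (t ++ [x]) = f t ++ [y] := by
    conv_lhs => rw [← List.take_append_drop t.length (f (t ++ [x]))]
    rw [htake, hy]
  exact this ▸ ⟨t ++ [x], hx, rfl⟩

lemma runs_image_finite (hc : Chronological T₁ T f)
    (hinj : ∀ t ∈ T₁, ∀ s ∈ T₁, f t = f s → t = s)
    (hT₁ : ∀ t ∈ T₁, ∀ k : ℕ, t.take k ∈ T₁)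
    (hfin : (Runs T₁).Finite) : (Runs (f '' T₁)).Finite := by
  rcases (Runs (f '' T₁)).eq_empty_or_nonempty with h | ⟨S₀, hS₀⟩
  · simp [h]
  -- a default element of M₁
  obtain ⟨t₀, ht₀, hft₀⟩ := hS₀ 1
  have ht₀len : t₀.length = 1 := by
    have := hc.2.1 t₀ ht₀
    rw [hft₀, runPrefix_length] at this
    omega
  obtain ⟨d₁, rfl⟩ := List.length_eq_one_iff.mp ht₀len
  set F : (ℕ → M₁) → ℕ → M := fun R n => (f (runPrefix R (n+1))).getD n (S₀ n) with hF
  refine Set.Finite.subset (hfin.image F) ?_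
  intro S hS
  have H : ∀ n, ∃ t, t ∈ T₁ ∧ f t = runPrefix S n := by
    intro n; obtain ⟨t, ht, hft⟩ := hS n; exact ⟨t, ht, hft⟩
  choose t ht hft using H
  have hlen : ∀ n, (t n).length = n := by
    intro n
    have := hc.2.1 _ (ht n)
    rw [hft n, runPrefix_length] at this
    omega
  have coh : ∀ n m, n ≤ m → (t m).take n = t n := by
    intro n m hnm
    refine hinj _ (hT₁ _ (ht m) n) _ (ht n) ?_
    rw [hc.2.2 _ (ht m) n, hft m, hft n, runPrefix_take S hnm]
  set R : ℕ → M₁ := fun n => (t (n+1)).getD n d₁ with hR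
  have key : ∀ n, runPrefix R n = t n := by
    intro n
    apply List.ext_getElem (by rw [runPrefix_length, hlen])
    intro k h1 h2
    rw [runPrefix_getElem R (by rwa [runPrefix_length] at h1)]
    have hk : k < n := by rwa [hlen] at h2
    have hkk : k < (t (k+1)).length := by rw [hlen]; omega
    have : R k = (t (k+1))[k] := List.getD_eq_getElem _ d₁ hkk
    rw [this]
    have h3 : ((t n).take (k+1))[k]'(by simp [List.length_take]; omega) = (t n)[k] :=
      List.getElem_take
    rw [← h3]
    congr 1
    exact (coh (k+1) n hk).symm
  refine ⟨R, ?_, ?_⟩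
  · intro n; rw [key n]; exact ht n
  · funext n
    rw [hF]
    simp only
    rw [key (n+1), hft (n+1), runPrefix_getD]

lemma runs_union_subset {A B : Set (List M)}
    (hA : ∀ s ∈ A, ∀ k : ℕ, s.take k ∈ A) (hB : ∀ s ∈ B, ∀ k : ℕ, s.take k ∈ B) :
    Runs (A ∪ B) ⊆ Runs A ∪ Runs B := by
  intro S hS
  by_cases h : ∀ n, runPrefix S n ∈ A
  · exact Or.inl h
  · push_neg at h
    obtain ⟨n, hn⟩ := h
    right
    intro m
    rcases le_or_gt m n with hmn | hnm
    · have : runPrefix S n ∈ B := (hS n).resolve_left hn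
      have := hB _ this m
      rwa [runPrefix_take S hmn] at this
    · rcases hS m with hm | hm
      · exact absurd (by rw [← runPrefix_take S hnm.le]; exact hA _ hm n) hn
      · exact hm

lemma barMapsTo_id {R S : ℕ → M} (h : BarMapsTo id R S) : S = R :=
  eq_of_runPrefix_eq (fun n => (h n).trans rfl)

/-- The main construction: `G'` is the union of the images. -/
lemma main_amalg (G : Game M) (G₁ : Game M₁) (G₂ : Game M₂)
    (h₁ : G₁.IsFin) (h₂ : G₂.IsFin)
    (f : List M₁ → List M) (g : List M₂ → List M)
    (hf : IsGameEmbedding G₁ G f) (hg : IsGameEmbedding G₂ G g) :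
    ∃ G' : Game M, G'.IsFin ∧ IsGameEmbedding G₁ G' f ∧ IsGameEmbedding G₂ G' g ∧
      IsGameEmbedding G' G id := by
  obtain ⟨hcf, hinjf, hpayf⟩ := hf
  obtain ⟨hcg, hinjg, hpayg⟩ := hg
  set T' : Set (List M) := f '' G₁.tree ∪ g '' G₂.tree with hT'
  have hT'tree : IsGameTree T' := by
    constructor
    · rintro s (hs | hs) k
      · exact Or.inl (image_take_closed hcf G₁.isGameTree.1 s hs k)
      · exact Or.inr (image_take_closed hcg G₂.isGameTree.1 s hs k)
    · rintro s (hs | hs)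
      · obtain ⟨y, hy⟩ := image_ext hcf G₁.isGameTree.2 s hs
        exact ⟨y, Or.inl hy⟩
      · obtain ⟨y, hy⟩ := image_ext hcg G₂.isGameTree.2 s hs
        exact ⟨y, Or.inr hy⟩
  set G' : Game M := ⟨T', hT'tree, G.payoff ∩ Runs T', Set.inter_subset_right⟩ with hG'
  have hsub : T' ⊆ G.tree := by
    rintro _ (⟨t, ht, rfl⟩ | ⟨t, ht, rfl⟩)
    · exact hcf.1 t ht
    · exact hcg.1 t ht
  refine ⟨G', ?_, ?_, ?_, ?_⟩
  · -- finiteness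
    have h1 := runs_image_finite hcf hinjf G₁.isGameTree.1 h₁
    have h2 := runs_image_finite hcg hinjg G₂.isGameTree.1 h₂
    exact Set.Finite.subset (h1.union h2) (runs_union_subset
      (image_take_closed hcf G₁.isGameTree.1) (image_take_closed hcg G₂.isGameTree.1))
  · -- f : G₁ → G'
    refine ⟨⟨fun t ht => Or.inl ⟨t, ht, rfl⟩, hcf.2.1, hcf.2.2⟩, hinjf, ?_⟩
    intro R hR S hRS
    have hSr : S ∈ Runs T' := by
      intro n; rw [hRS n]; exact Or.inl ⟨_, hR n, rfl⟩
    rw [hpayf R hR S hRS]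
    simp only [hG', Set.mem_inter_iff]
    exact ⟨fun h => ⟨h, hSr⟩, fun h => h.1⟩
  · -- g : G₂ → G'
    refine ⟨⟨fun t ht => Or.inr ⟨t, ht, rfl⟩, hcg.2.1, hcg.2.2⟩, hinjg, ?_⟩
    intro R hR S hRS
    have hSr : S ∈ Runs T' := by
      intro n; rw [hRS n]; exact Or.inr ⟨_, hR n, rfl⟩
    rw [hpayg R hR S hRS]
    simp only [hG', Set.mem_inter_iff]
    exact ⟨fun h => ⟨h, hSr⟩, fun h => h.1⟩
  · -- id : G' → G
    refine ⟨⟨fun t ht => hsub ht, fun t _ => rfl, fun t _ k => rfl⟩,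
      fun t _ s _ h => h, ?_⟩
    intro R hR S hRS
    rw [barMapsTo_id hRS]
    simp only [hG', Set.mem_inter_iff]
    exact ⟨fun h => h.1, fun h => ⟨h, hR⟩⟩

end Aux

/-- for every game `G`, the comma category of finite games with game
embeddings over `G` has the joint embedding property and the amalgamation
property. -/
theorem finite_games_over_game_jep_and_ap {M : Type u} (G : Game M) :
    -- (JEP)
    (∀ (M₁ M₂ : Type u) (G₁ : Game M₁) (G₂ : Game M₂), G₁.IsFin → G₂.IsFin →
      ∀ (f : List M₁ → List M) (g : List M₂ → List M),
        IsGameEmbedding G₁ G f → IsGameEmbedding G₂ G g →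
        ∃ (N : Type u) (G' : Game N), G'.IsFin ∧
          ∃ (f' : List M₁ → List N) (g' : List M₂ → List N) (i : List N → List M),
            IsGameEmbedding G₁ G' f' ∧ IsGameEmbedding G₂ G' g' ∧
            IsGameEmbedding G' G i ∧
            (∀ t ∈ G₁.tree, i (f' t) = f t) ∧ (∀ t ∈ G₂.tree, i (g' t) = g t)) ∧
    -- (AP)
    (∀ (M₁ M₂ P : Type u) (G₁ : Game M₁) (G₂ : Game M₂) (H : Game P),
      G₁.IsFin → G₂.IsFin → H.IsFin →
      ∀ (f : List M₁ → List M) (g : List M₂ → List M)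
        (c₁ : List P → List M₁) (c₂ : List P → List M₂),
        IsGameEmbedding G₁ G f → IsGameEmbedding G₂ G g →
        IsGameEmbedding H G₁ c₁ → IsGameEmbedding H G₂ c₂ →
        (∀ t ∈ H.tree, f (c₁ t) = g (c₂ t)) →
        ∃ (N : Type u) (G' : Game N), G'.IsFin ∧
          ∃ (f' : List M₁ → List N) (g' : List M₂ → List N) (i : List N → List M),
            IsGameEmbedding G₁ G' f' ∧ IsGameEmbedding G₂ G' g' ∧
            IsGameEmbedding G' G i ∧
            (∀ t ∈ G₁.tree, i (f' t) = f t) ∧ (∀ t ∈ G₂.tree, i (g' t) = g t) ∧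
            (∀ t ∈ H.tree, f' (c₁ t) = g' (c₂ t))) := by
  constructor
  · intro M₁ M₂ G₁ G₂ h₁ h₂ f g hf hg
    obtain ⟨G', hfin, hf', hg', hi⟩ := main_amalg G G₁ G₂ h₁ h₂ f g hf hg
    exact ⟨M, G', hfin, f, g, id, hf', hg', hi,
      fun t _ => rfl, fun t _ => rfl⟩
  · intro M₁ M₂ P G₁ G₂ H h₁ h₂ hH f g c₁ c₂ hf hg hc₁ hc₂ hcomm
    obtain ⟨G', hfin, hf', hg', hi⟩ := main_amalg G G₁ G₂ h₁ h₂ f g hf hg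
    exact ⟨M, G', hfin, f, g, id, hf', hg', hi,
      fun t _ => rfl, fun t _ => rfl, fun t ht => hcomm t ht⟩


end FraisseGames
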